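/- Let a ∈ ℝ, ℓ > 0, δ > 0, integers m, n ≥ 1, K₁, K₂ ≥ 0, and let χ : ℝ → ℝ be twice continuously differentiable with |χ′(x)| ≤ K₁ and |χ″(x)| ≤ K₂ for all x. Define ψ(x,y) = χ((x−a)/ℓ)·sin(πm(x−a)/ℓ)·sin(πny/δ) and μ = π²(m²/ℓ² + n²/δ²). Then ∫_{[a,a+ℓ]×[0,δ]} ( Δψ(x,y) + μ·ψ(x,y) )² dx dy ≤ (2πm·K₁ + K₂)²·δ/(2ℓ³). -/

import Mathlib

open Real MeasureTheory

section aux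
variable (a ℓ : ℝ) (m : ℕ) (χ : ℝ → ℝ)

lemma d1 (hχ : ContDiff ℝ 2 χ) (x : ℝ) :
    HasDerivAt (fun t => χ ((t - a) / ℓ) * Real.sin (π * m * (t - a) / ℓ))
      (deriv χ ((x - a) / ℓ) * (1 / ℓ) * Real.sin (π * m * (x - a) / ℓ)
        + χ ((x - a) / ℓ) * (Real.cos (π * m * (x - a) / ℓ) * (π * m * 1 / ℓ))) x := by
  have hlin : HasDerivAt (fun t : ℝ => (t - a) / ℓ) (1 / ℓ) x :=
    ((hasDerivAt_id x).sub_const a).div_const ℓ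
  have h1 : HasDerivAt (fun t => χ ((t - a) / ℓ)) (deriv χ ((x - a) / ℓ) * (1 / ℓ)) x :=
    ((hχ.differentiable (by norm_num) ((x - a) / ℓ)).hasDerivAt).comp x hlin
  have hlin2 : HasDerivAt (fun t : ℝ => π * m * (t - a) / ℓ) (π * m * 1 / ℓ) x :=
    (((hasDerivAt_id x).sub_const a).const_mul (π * m)).div_const ℓ
  have h2 : HasDerivAt (fun t => Real.sin (π * m * (t - a) / ℓ))
      (Real.cos (π * m * (x - a) / ℓ) * (π * m * 1 / ℓ)) x :=
    (Real.hasDerivAt_sin _).comp x hlin2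
  exact h1.mul h2

lemma d2 (hχ : ContDiff ℝ 2 χ) (x : ℝ) :
    HasDerivAt (fun t => deriv χ ((t - a) / ℓ) * (1 / ℓ) * Real.sin (π * m * (t - a) / ℓ)
        + χ ((t - a) / ℓ) * (Real.cos (π * m * (t - a) / ℓ) * (π * m * 1 / ℓ)))
      (deriv (deriv χ) ((x - a) / ℓ) * (1 / ℓ) * (1 / ℓ) * Real.sin (π * m * (x - a) / ℓ)
        + deriv χ ((x - a) / ℓ) * (1 / ℓ) * (Real.cos (π * m * (x - a) / ℓ) * (π * m * 1 / ℓ))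
        + (deriv χ ((x - a) / ℓ) * (1 / ℓ) * (Real.cos (π * m * (x - a) / ℓ) * (π * m * 1 / ℓ))
          + χ ((x - a) / ℓ) * (-Real.sin (π * m * (x - a) / ℓ) * (π * m * 1 / ℓ) * (π * m * 1 / ℓ)))) x := by
  have hχ' : ContDiff ℝ 1 (deriv χ) := (contDiff_succ_iff_deriv.mp (show ContDiff ℝ (1+1) χ by norm_num; exact hχ)).2.2
  have hlin : HasDerivAt (fun t : ℝ => (t - a) / ℓ) (1 / ℓ) x :=
    ((hasDerivAt_id x).sub_const a).div_const ℓ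
  have h1 : HasDerivAt (fun t => deriv χ ((t - a) / ℓ)) (deriv (deriv χ) ((x - a) / ℓ) * (1 / ℓ)) x :=
    by have hd : HasDerivAt (deriv χ) (deriv (deriv χ) ((x - a) / ℓ)) ((x - a) / ℓ) := (hχ'.differentiable one_ne_zero ((x - a) / ℓ)).hasDerivAt
       exact hd.comp x hlin
  have h0 : HasDerivAt (fun t => χ ((t - a) / ℓ)) (deriv χ ((x - a) / ℓ) * (1 / ℓ)) x :=
    ((hχ.differentiable (by norm_num) ((x - a) / ℓ)).hasDerivAt).comp x hlin
  have hlin2 : HasDerivAt (fun t : ℝ => π * m * (t - a) / ℓ) (π * m * 1 / ℓ) x :=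
    (((hasDerivAt_id x).sub_const a).const_mul (π * m)).div_const ℓ
  have hs : HasDerivAt (fun t => Real.sin (π * m * (t - a) / ℓ))
      (Real.cos (π * m * (x - a) / ℓ) * (π * m * 1 / ℓ)) x :=
    (Real.hasDerivAt_sin _).comp x hlin2
  have hc : HasDerivAt (fun t => Real.cos (π * m * (t - a) / ℓ))
      (-Real.sin (π * m * (x - a) / ℓ) * (π * m * 1 / ℓ)) x :=
    (Real.hasDerivAt_cos _).comp x hlin2
  have hA : HasDerivAt (fun t => deriv χ ((t - a) / ℓ) * (1 / ℓ) * Real.sin (π * m * (t - a) / ℓ))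
      (deriv (deriv χ) ((x - a) / ℓ) * (1 / ℓ) * (1 / ℓ) * Real.sin (π * m * (x - a) / ℓ)
        + deriv χ ((x - a) / ℓ) * (1 / ℓ) * (Real.cos (π * m * (x - a) / ℓ) * (π * m * 1 / ℓ))) x := by
    exact (h1.mul_const (1 / ℓ)).mul hs
  have hB : HasDerivAt (fun t => χ ((t - a) / ℓ) * (Real.cos (π * m * (t - a) / ℓ) * (π * m * 1 / ℓ)))
      (deriv χ ((x - a) / ℓ) * (1 / ℓ) * (Real.cos (π * m * (x - a) / ℓ) * (π * m * 1 / ℓ))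
        + χ ((x - a) / ℓ) * (-Real.sin (π * m * (x - a) / ℓ) * (π * m * 1 / ℓ) * (π * m * 1 / ℓ))) x := by
    exact h0.mul (hc.mul_const (π * m * 1 / ℓ))
  exact hA.add hB
end aux

theorem stmt_12 (a ℓ δ : ℝ) (hℓ : 0 < ℓ) (hδ : 0 < δ)
    (m n : ℕ) (hm : 1 ≤ m) (hn : 1 ≤ n)
    (K₁ K₂ : ℝ) (hK₁ : 0 ≤ K₁) (hK₂ : 0 ≤ K₂)
    (χ : ℝ → ℝ) (hχ : ContDiff ℝ 2 χ)
    (hχ' : ∀ x, |deriv χ x| ≤ K₁) (hχ'' : ∀ x, |deriv (deriv χ) x| ≤ K₂)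
    (ψ : ℝ → ℝ → ℝ)
    (hψ : ∀ x y, ψ x y =
      χ ((x - a) / ℓ) * Real.sin (π * m * (x - a) / ℓ) * Real.sin (π * n * y / δ))
    (μ : ℝ) (hμ : μ = π ^ 2 * ((m : ℝ) ^ 2 / ℓ ^ 2 + (n : ℝ) ^ 2 / δ ^ 2)) :
    ∫ z in Set.Icc a (a + ℓ) ×ˢ Set.Icc (0 : ℝ) δ,
        (deriv (deriv fun t => ψ t z.2) z.1 + deriv (deriv fun t => ψ z.1 t) z.2
          + μ * ψ z.1 z.2) ^ 2
      ≤ (2 * π * m * K₁ + K₂) ^ 2 * δ / (2 * ℓ ^ 3) := by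
  have hℓ0 : ℓ ≠ 0 := hℓ.ne'
  have hδ0 : δ ≠ 0 := hδ.ne'
  set A : ℝ → ℝ := fun x =>
    deriv (deriv χ) ((x - a) / ℓ) * (1 / ℓ) * (1 / ℓ) * Real.sin (π * m * (x - a) / ℓ)
      + 2 * (deriv χ ((x - a) / ℓ) * (1 / ℓ) * (Real.cos (π * m * (x - a) / ℓ) * (π * m * 1 / ℓ)))
    with hA_def
  -- pointwise identity
  have key : ∀ z : ℝ × ℝ,
      (deriv (deriv fun t => ψ t z.2) z.1 + deriv (deriv fun t => ψ z.1 t) z.2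
        + μ * ψ z.1 z.2) ^ 2 = (A z.1) ^ 2 * Real.sin (π * n * z.2 / δ) ^ 2 := by
    rintro ⟨x, y⟩
    simp only
    have ex : (fun t => ψ t y)
        = fun t => χ ((t - a) / ℓ) * Real.sin (π * m * (t - a) / ℓ) * Real.sin (π * n * y / δ) :=
      funext fun t => hψ t y
    have dx1 : deriv (fun t => ψ t y) = fun x =>
        (deriv χ ((x - a) / ℓ) * (1 / ℓ) * Real.sin (π * m * (x - a) / ℓ)
          + χ ((x - a) / ℓ) * (Real.cos (π * m * (x - a) / ℓ) * (π * m * 1 / ℓ)))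
          * Real.sin (π * n * y / δ) :=
      funext fun x => by rw [ex]; exact ((d1 a ℓ m χ hχ x).mul_const _).deriv
    have dx2 : deriv (deriv fun t => ψ t y) x =
        (deriv (deriv χ) ((x - a) / ℓ) * (1 / ℓ) * (1 / ℓ) * Real.sin (π * m * (x - a) / ℓ)
          + deriv χ ((x - a) / ℓ) * (1 / ℓ) * (Real.cos (π * m * (x - a) / ℓ) * (π * m * 1 / ℓ))
          + (deriv χ ((x - a) / ℓ) * (1 / ℓ) * (Real.cos (π * m * (x - a) / ℓ) * (π * m * 1 / ℓ))
            + χ ((x - a) / ℓ) * (-Real.sin (π * m * (x - a) / ℓ) * (π * m * 1 / ℓ) * (π * m * 1 / ℓ))))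
          * Real.sin (π * n * y / δ) := by
      rw [dx1]; exact ((d2 a ℓ m χ hχ x).mul_const _).deriv
    have ey : (fun t => ψ x t)
        = fun t => χ ((x - a) / ℓ) * Real.sin (π * m * (x - a) / ℓ) * Real.sin (π * n * t / δ) :=
      funext fun t => hψ x t
    have hliny : ∀ t : ℝ, HasDerivAt (fun s : ℝ => π * n * s / δ) (π * n * 1 / δ) t :=
      fun t => ((hasDerivAt_id t).const_mul (π * n)).div_const δ
    have dy1 : deriv (fun t => ψ x t) = fun t =>
        χ ((x - a) / ℓ) * Real.sin (π * m * (x - a) / ℓ)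
          * (Real.cos (π * n * t / δ) * (π * n * 1 / δ)) :=
      funext fun t => by
        rw [ey]
        exact ((((Real.hasDerivAt_sin _).comp t (hliny t)).const_mul _)).deriv
    have dy2 : deriv (deriv fun t => ψ x t) y =
        χ ((x - a) / ℓ) * Real.sin (π * m * (x - a) / ℓ)
          * (-Real.sin (π * n * y / δ) * (π * n * 1 / δ) * (π * n * 1 / δ)) := by
      rw [dy1]
      exact ((((Real.hasDerivAt_cos _).comp y (hliny y)).mul_const _).const_mul _).deriv
    rw [dx2, dy2, hψ x y, hμ, hA_def]
    have : ((deriv (deriv χ) ((x - a) / ℓ) * (1 / ℓ) * (1 / ℓ) * Real.sin (π * m * (x - a) / ℓ)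
          + deriv χ ((x - a) / ℓ) * (1 / ℓ) * (Real.cos (π * m * (x - a) / ℓ) * (π * m * 1 / ℓ))
          + (deriv χ ((x - a) / ℓ) * (1 / ℓ) * (Real.cos (π * m * (x - a) / ℓ) * (π * m * 1 / ℓ))
            + χ ((x - a) / ℓ) * (-Real.sin (π * m * (x - a) / ℓ) * (π * m * 1 / ℓ) * (π * m * 1 / ℓ))))
          * Real.sin (π * n * y / δ)
        + χ ((x - a) / ℓ) * Real.sin (π * m * (x - a) / ℓ)
          * (-Real.sin (π * n * y / δ) * (π * n * 1 / δ) * (π * n * 1 / δ))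
        + π ^ 2 * ((m : ℝ) ^ 2 / ℓ ^ 2 + (n : ℝ) ^ 2 / δ ^ 2)
          * (χ ((x - a) / ℓ) * Real.sin (π * m * (x - a) / ℓ) * Real.sin (π * n * y / δ)))
        = (deriv (deriv χ) ((x - a) / ℓ) * (1 / ℓ) * (1 / ℓ) * Real.sin (π * m * (x - a) / ℓ)
          + 2 * (deriv χ ((x - a) / ℓ) * (1 / ℓ)
            * (Real.cos (π * m * (x - a) / ℓ) * (π * m * 1 / ℓ))))
          * Real.sin (π * n * y / δ) := by
      field_simp
      ring
    rw [this, mul_pow]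
  -- rewrite the integrand
  simp only [key]
  have hm' : (0 : ℝ) < m := by exact_mod_cast hm
  have hn' : (0 : ℝ) < n := by exact_mod_cast hn
  -- bound on A
  have hbound : ∀ x, (A x) ^ 2 ≤ ((2 * π * m * K₁ + K₂) / ℓ ^ 2) ^ 2 := by
    intro x
    have habs : |A x| ≤ (2 * π * m * K₁ + K₂) / ℓ ^ 2 := by
      have t1 : |deriv (deriv χ) ((x - a) / ℓ) * (1 / ℓ) * (1 / ℓ)
            * Real.sin (π * m * (x - a) / ℓ)| ≤ K₂ * (1 / ℓ) * (1 / ℓ) * 1 := by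
        rw [abs_mul, abs_mul, abs_mul, abs_of_pos (show (0:ℝ) < 1 / ℓ by positivity)]
        gcongr
        · exact hχ'' _
        · exact Real.abs_sin_le_one _
      have t2 : |2 * (deriv χ ((x - a) / ℓ) * (1 / ℓ)
            * (Real.cos (π * m * (x - a) / ℓ) * (π * m * 1 / ℓ)))|
          ≤ 2 * (K₁ * (1 / ℓ) * (1 * (π * m * 1 / ℓ))) := by
        rw [abs_mul, abs_mul, abs_mul, abs_mul, abs_two,
          abs_of_pos (show (0:ℝ) < 1 / ℓ by positivity),
          abs_of_pos (show (0:ℝ) < π * m * 1 / ℓ by positivity)]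
        gcongr
        · exact hχ' _
        · exact Real.abs_cos_le_one _
      calc |A x| ≤ _ := abs_add_le _ _
        _ ≤ K₂ * (1 / ℓ) * (1 / ℓ) * 1 + 2 * (K₁ * (1 / ℓ) * (1 * (π * m * 1 / ℓ))) :=
            add_le_add t1 t2
        _ = (2 * π * m * K₁ + K₂) / ℓ ^ 2 := by field_simp; ring
    calc (A x) ^ 2 = |A x| ^ 2 := (sq_abs _).symm
      _ ≤ ((2 * π * m * K₁ + K₂) / ℓ ^ 2) ^ 2 :=
        pow_le_pow_left₀ (abs_nonneg _) habs 2
  -- continuity / integrability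
  have hχ1 : ContDiff ℝ 1 (deriv χ) :=
    (contDiff_succ_iff_deriv.mp (show ContDiff ℝ (1 + 1) χ by norm_num; exact hχ)).2.2
  have hcA : Continuous A := by
    have c0 : Continuous fun x : ℝ => (x - a) / ℓ := by fun_prop
    have c1 : Continuous (deriv χ) := hχ1.continuous
    have c2 : Continuous (deriv (deriv χ)) := hχ1.continuous_deriv le_rfl
    rw [hA_def]
    fun_prop
  have hcont : Continuous fun z : ℝ × ℝ => (A z.1) ^ 2 * Real.sin (π * n * z.2 / δ) ^ 2 := by
    fun_prop
  have hcont2 : Continuous fun z : ℝ × ℝ =>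
      ((2 * π * m * K₁ + K₂) / ℓ ^ 2) ^ 2 * Real.sin (π * n * z.2 / δ) ^ 2 := by fun_prop
  have hK : IsCompact (Set.Icc a (a + ℓ) ×ˢ Set.Icc (0:ℝ) δ) :=
    isCompact_Icc.prod isCompact_Icc
  have hMS : MeasurableSet (Set.Icc a (a + ℓ) ×ˢ Set.Icc (0:ℝ) δ) :=
    measurableSet_Icc.prod measurableSet_Icc
  have hint1 : IntegrableOn (fun z : ℝ × ℝ => (A z.1) ^ 2 * Real.sin (π * n * z.2 / δ) ^ 2)
      (Set.Icc a (a + ℓ) ×ˢ Set.Icc (0:ℝ) δ) := hcont.continuousOn.integrableOn_compact hK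
  have hint2 : IntegrableOn (fun z : ℝ × ℝ =>
      ((2 * π * m * K₁ + K₂) / ℓ ^ 2) ^ 2 * Real.sin (π * n * z.2 / δ) ^ 2)
      (Set.Icc a (a + ℓ) ×ˢ Set.Icc (0:ℝ) δ) := hcont2.continuousOn.integrableOn_compact hK
  have step1 : ∫ z in Set.Icc a (a + ℓ) ×ˢ Set.Icc (0:ℝ) δ,
      (A z.1) ^ 2 * Real.sin (π * n * z.2 / δ) ^ 2
      ≤ ∫ z in Set.Icc a (a + ℓ) ×ˢ Set.Icc (0:ℝ) δ,
        ((2 * π * m * K₁ + K₂) / ℓ ^ 2) ^ 2 * Real.sin (π * n * z.2 / δ) ^ 2 :=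
    setIntegral_mono_on hint1 hint2 hMS
      (fun z _ => mul_le_mul_of_nonneg_right (hbound z.1) (sq_nonneg _))
  refine le_trans step1 ?_
  -- compute the right-hand integral
  have hc : π * n / δ ≠ 0 := by positivity
  have hsin : (∫ y in Set.Icc (0:ℝ) δ, Real.sin (π * n * y / δ) ^ 2) = δ / 2 := by
    rw [integral_Icc_eq_integral_Ioc, ← intervalIntegral.integral_of_le hδ.le]
    simp only [show ∀ y : ℝ, π * n * y / δ = (π * n / δ) * y from fun y => by ring]
    rw [intervalIntegral.integral_comp_mul_left (fun u => Real.sin u ^ 2) hc]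
    have h1 : π * n / δ * δ = π * n := by field_simp
    rw [mul_zero, h1, integral_sin_sq]
    have h2 : Real.sin (π * n) = 0 := by
      rw [mul_comm]; exact Real.sin_nat_mul_pi n
    rw [h2]
    simp only [Real.sin_zero, smul_eq_mul]
    field_simp
    ring
  have hprod : (∫ z in Set.Icc a (a + ℓ) ×ˢ Set.Icc (0:ℝ) δ,
      ((2 * π * m * K₁ + K₂) / ℓ ^ 2) ^ 2 * Real.sin (π * n * z.2 / δ) ^ 2)
      = (∫ _x in Set.Icc a (a + ℓ), ((2 * π * m * K₁ + K₂) / ℓ ^ 2) ^ 2)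
        * ∫ y in Set.Icc (0:ℝ) δ, Real.sin (π * n * y / δ) ^ 2 := by
    rw [MeasureTheory.Measure.volume_eq_prod]
    exact setIntegral_prod_mul (fun _ => ((2 * π * m * K₁ + K₂) / ℓ ^ 2) ^ 2)
      (fun y => Real.sin (π * n * y / δ) ^ 2) _ _
  rw [hprod, hsin, setIntegral_const, Real.volume_real_Icc_of_le (by linarith),
    show a + ℓ - a = ℓ by ring, smul_eq_mul]
  rw [div_pow]
  rw [show ℓ * ((2 * π * m * K₁ + K₂) ^ 2 / (ℓ ^ 2) ^ 2) * (δ / 2)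
      = (2 * π * m * K₁ + K₂) ^ 2 * δ / (2 * ℓ ^ 3) from by field_simp]
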